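/- Let q be even and Q a quadratic form on V = F_q^n with V = U ⊕ S, where S is the maximal subspace of the radical of Q on which Q vanishes. An invertible linear map g of V preserves Q if and only if, in block form with respect to U ⊕ S, g = [[A, 0], [B, C]] where A is an isometry of Q restricted to U, B : U → S is an arbitrary linear map, and C ∈ GL(S). -/

import Mathlib

/-- Block decomposition of isometries: let `q` be even and `Q` a quadratic form
on `V = F_q^n` with `V = U ⊕ S`, where `S` is the maximal subspace of the
radical of (the polar form of) `Q` on which `Q` vanishes. An invertible linear
map `g` of `V` preserves `Q` if and only if, in block form, `g = [[A,0],[B,C]]`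
with `A` an isometry of `Q|U`, `B : U → S` an arbitrary linear map, and
`C ∈ GL(S)`. -/
theorem stmt_15 (Fq : Type) [Field Fq] [Fintype Fq] [CharP Fq 2] (n : ℕ)
    (Q : QuadraticForm Fq (Fin n → Fq))
    (U S : Submodule Fq (Fin n → Fq)) (hUS : IsCompl U S)
    (hS : ∀ x, x ∈ S ↔ (∀ y, QuadraticMap.polar Q x y = 0) ∧ Q x = 0)
    (g : (Fin n → Fq) ≃ₗ[Fq] (Fin n → Fq)) :
    (∀ x, Q (g x) = Q x) ↔
      ∃ (A : U ≃ₗ[Fq] U) (B : U →ₗ[Fq] S) (C : S ≃ₗ[Fq] S),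
        (∀ u : U, Q (A u) = Q u) ∧
        (∀ u : U, g u = (A u : Fin n → Fq) + (B u : Fin n → Fq)) ∧
        (∀ s : S, g s = (C s : Fin n → Fq)) := by
  -- key: adding an element of S doesn't change Q
  have hQadd : ∀ (a s : Fin n → Fq), s ∈ S → Q (a + s) = Q a := by
    intro a s hs
    obtain ⟨hpol, hQs⟩ := (hS s).1 hs
    have h := hpol a
    rw [QuadraticMap.polar] at h
    have : Q (s + a) = Q a := by
      have := h
      rw [hQs] at this
      linear_combination this
    rwa [add_comm] at this
  constructor
  · intro hg
    have hpolg : ∀ x y, QuadraticMap.polar Q (g x) (g y) = QuadraticMap.polar Q x y := by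
      intro x y
      rw [QuadraticMap.polar, QuadraticMap.polar, ← g.map_add, hg, hg, hg]
    -- g maps S into S
    have hgS : ∀ x ∈ S, g x ∈ S := by
      intro x hx
      obtain ⟨hpol, hQx⟩ := (hS x).1 hx
      refine (hS (g x)).2 ⟨fun y => ?_, by rw [hg]; exact hQx⟩
      have := hpolg x (g.symm y)
      rw [g.apply_symm_apply] at this
      rw [this]; exact hpol _
    have hgS' : ∀ x ∈ S, g.symm x ∈ S := by
      intro x hx
      obtain ⟨hpol, hQx⟩ := (hS x).1 hx
      refine (hS (g.symm x)).2 ⟨fun y => ?_, ?_⟩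
      · have := hpolg (g.symm x) y
        rw [g.apply_symm_apply] at this
        rw [← this]; exact hpol _
      · rw [← hg (g.symm x), g.apply_symm_apply]; exact hQx
    -- C : restriction of g to S
    set c : S →ₗ[Fq] S := g.toLinearMap.restrict hgS with hc
    have hcbij : Function.Bijective c := by
      constructor
      · intro a b hab
        have : g a = g b := congrArg Subtype.val hab
        exact Subtype.ext (g.injective this)
      · intro s
        refine ⟨⟨g.symm s, hgS' s s.2⟩, ?_⟩
        apply Subtype.ext
        simp [hc, LinearMap.restrict_apply]
    set C : S ≃ₗ[Fq] S := LinearEquiv.ofBijective c hcbij with hC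
    -- projections
    set P := U.linearProjOfIsCompl S hUS with hP
    set P' := S.linearProjOfIsCompl U hUS.symm with hP'
    set a : U →ₗ[Fq] U := P.comp (g.toLinearMap.comp U.subtype) with ha
    set b : U →ₗ[Fq] S := P'.comp (g.toLinearMap.comp U.subtype) with hb
    have hsum : ∀ u : U, (a u : Fin n → Fq) + (b u : Fin n → Fq) = g u := fun u =>
      Submodule.projection_add_projection_eq_self hUS (g u)
    have hker : LinearMap.ker a = ⊥ := by
      rw [eq_bot_iff]
      intro u hu
      have hu' : P (g (u : Fin n → Fq)) = 0 := by simpa [ha] using hu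
      have h3 : g (u : Fin n → Fq) ∈ S :=
        (Submodule.linearProjOfIsCompl_apply_eq_zero_iff hUS).1 hu'
      have h4 : (u : Fin n → Fq) ∈ S := by
        have := hgS' _ h3; simpa using this
      have h6 : (u : Fin n → Fq) ∈ U ⊓ S := ⟨u.2, h4⟩
      rw [hUS.disjoint.eq_bot] at h6
      simpa using Subtype.ext (by simpa using h6 : (u : Fin n → Fq) = 0)
    have hainj : Function.Injective a := LinearMap.ker_eq_bot.1 hker
    have hasurj : Function.Surjective a :=
      (LinearMap.injective_iff_surjective).1 hainj
    refine ⟨LinearEquiv.ofBijective a (show Function.Bijective a from ⟨hainj, hasurj⟩), b, C, ?_, ?_, ?_⟩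
    · intro u
      rw [LinearEquiv.ofBijective_apply]
      calc Q ((a u : Fin n → Fq)) = Q ((a u : Fin n → Fq) + (b u : Fin n → Fq)) :=
            (hQadd _ _ (b u).2).symm
        _ = Q (g u) := by rw [hsum]
        _ = Q u := hg u
    · intro u
      rw [LinearEquiv.ofBijective_apply]
      exact (hsum u).symm
    · intro s
      rw [hC, LinearEquiv.ofBijective_apply, hc, LinearMap.restrict_apply]
      rfl
  · rintro ⟨A, B, C, hA, hAB, hC⟩ x
    obtain ⟨u, s, rfl, -⟩ := Submodule.existsUnique_add_of_isCompl hUS x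
    have h1 : Q ((u : Fin n → Fq) + s) = Q u := hQadd _ _ s.2
    have h2 : g ((u : Fin n → Fq) + s) = (A u : Fin n → Fq) + ((B u : Fin n → Fq) + (C s : Fin n → Fq)) := by
      rw [map_add, hAB, hC, add_assoc]
    rw [h2, hQadd _ _ (add_mem (B u).2 (C s).2), hA, h1]
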